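/- Let C be a triangulated category in which every exact triangle splits and which is generated by a single nonzero indecomposable object X. Then the graded endomorphism ring End*(X) = ⊕_n Hom(X, Σⁿ X) is a graded skew-field: every nonzero homogeneous element is invertible. -/

import Mathlib

open CategoryTheory CategoryTheory.Limits CategoryTheory.Pretriangulated

section Aux

variable {D : Type*} [Category D] [Preadditive D] [HasFiniteBiproducts D]

attribute [local instance] hasBinaryBiproducts_of_finite_biproducts

lemma aux_isZero_of_retract {A B : D} (r : A ⟶ B) (s : B ⟶ A) (h : s ≫ r = 𝟙 B)
    (hA : IsZero A) : IsZero B := by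
  rw [IsZero.iff_id_eq_zero, ← h, hA.eq_zero_of_tgt s, zero_comp]

/-- Splitting off one index from a finite biproduct. -/
noncomputable def auxSplitIso {n : ℕ} (A : Fin n → D) (j : Fin n) :
    (⨁ A) ≅ A j ⊞ ⨁ (fun i : {i : Fin n // i ≠ j} => A i.1) where
  hom := biprod.lift (biproduct.π A j) (biproduct.lift fun i => biproduct.π A i.1)
  inv := biprod.desc (biproduct.ι A j) (biproduct.desc fun i => biproduct.ι A i.1)
  hom_inv_id := by
    rw [biprod.lift_desc, biproduct.lift_desc, ← biproduct.total (f := A)]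
    rw [← Finset.sum_erase_add _ _ (Finset.mem_univ j), add_comm]
    congr 1
    exact (Finset.sum_subtype (Finset.univ.erase j) (by simp [Finset.mem_erase])
      (fun k => biproduct.π A k ≫ biproduct.ι A k)).symm
  inv_hom_id := by
    ext i k
    · simp
    · simp [biproduct.ι_π_ne _ (Ne.symm i.2)]
    · simp [biproduct.ι_π_ne _ i.2]
    · rcases eq_or_ne i k with rfl | hik
      · simp
      · simp [biproduct.ι_π_ne _ hik,
          biproduct.ι_π_ne _ (fun hh => hik (Subtype.ext hh))]

/-- An additive functor sends binary biproducts to binary biproducts. -/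
noncomputable def auxMapBiprod {E : Type*} [Category E] [Preadditive E] [HasFiniteBiproducts E]
    (F : D ⥤ E) [F.Additive] (A B : D) : F.obj (A ⊞ B) ≅ F.obj A ⊞ F.obj B where
  hom := biprod.lift (F.map biprod.fst) (F.map biprod.snd)
  inv := biprod.desc (F.map biprod.inl) (F.map biprod.inr)
  hom_inv_id := by
    rw [biprod.lift_desc, ← F.map_comp, ← F.map_comp, ← F.map_add, biprod.total, F.map_id]
  inv_hom_id := by
    ext <;> simp [← F.map_comp]

lemma aux_zero_of_ne {X : D}
    (hind : ∀ A B : D, (X ≅ A ⊞ B) → IsZero A ∨ IsZero B)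
    {n : ℕ} {A : Fin n → D} (w : X ≅ ⨁ A) {i₀ : Fin n} (h₀ : ¬ IsZero (A i₀)) :
    ∀ i, i ≠ i₀ → IsZero (A i) := by
  intro j hj
  rcases hind _ _ (w ≪≫ auxSplitIso A j) with h | h
  · exact h
  · exact absurd (aux_isZero_of_retract
      (biproduct.π (fun i : {i : Fin n // i ≠ j} => A i.1) ⟨i₀, Ne.symm hj⟩)
      (biproduct.ι (fun i : {i : Fin n // i ≠ j} => A i.1) ⟨i₀, Ne.symm hj⟩)
      (biproduct.ι_π_self _ _) h) h₀

end Aux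

variable {C : Type*} [Category C] [Preadditive C] [HasZeroObject C]
  [HasShift C ℤ] [∀ n : ℤ, (CategoryTheory.shiftFunctor C n).Additive] [Pretriangulated C]
  [HasFiniteBiproducts C]

/-- A triangle one of whose three arrows is an isomorphism. -/
def HasIsoArrow (T : Triangle C) : Prop :=
  IsIso T.mor₁ ∨ IsIso T.mor₂ ∨ IsIso T.mor₃

/-- A triangle is split if it is isomorphic to a (finite) direct sum of triangles each
having an isomorphism as one of its arrows. -/
def IsSplitTriangle (T : Triangle C) : Prop :=
  ∃ (n : ℕ) (Ts : Fin n → Triangle C)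
    (φ : (⨁ fun i => (Ts i).obj₃) ⟶ (⨁ fun i => (Ts i).obj₁)⟦(1 : ℤ)⟧),
    (∀ i, HasIsoArrow (Ts i)) ∧
    (∀ i, biproduct.ι (fun i => (Ts i).obj₃) i ≫ φ =
      (Ts i).mor₃ ≫ (biproduct.ι (fun i => (Ts i).obj₁) i)⟦(1 : ℤ)⟧') ∧
    Nonempty (T ≅ Triangle.mk (biproduct.map fun i => (Ts i).mor₁)
      (biproduct.map fun i => (Ts i).mor₂) φ)

/-- A thick-subcategory-style generation predicate: X generates C if the only subclass
of objects containing X and closed under isomorphisms, shifts, extensions and retracts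
is the class of all objects. -/
def GeneratesThickly (X : C) : Prop :=
  ∀ S : Set C,
    (∀ A B : C, (A ≅ B) → A ∈ S → B ∈ S) →
    (∀ A : C, A ∈ S → (A⟦(1 : ℤ)⟧ ∈ S ∧ A⟦(-1 : ℤ)⟧ ∈ S)) →
    (∀ T ∈ distTriang C, T.obj₁ ∈ S → T.obj₂ ∈ S → T.obj₃ ∈ S) →
    (∀ (A B : C) (r : A ⟶ B) (s : B ⟶ A), s ≫ r = 𝟙 B → A ∈ S → B ∈ S) →
    X ∈ S → ∀ A : C, A ∈ S

/-- in a simple triangulated category (every exact triangle splits,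
generated by a nonzero indecomposable X), every nonzero homogeneous element of the
graded endomorphism ring of X, i.e. every nonzero f : X ⟶ ΣⁿX, is invertible; thus
End*(X) is a graded skew-field. -/
theorem graded_endomorphisms_skew_field_of_simple
    (hsplit : ∀ T ∈ distTriang C, IsSplitTriangle T)
    (X : C) (hX : ¬ IsZero X)
    (hind : ∀ A B : C, (X ≅ A ⊞ B) → IsZero A ∨ IsZero B)
    (hgen : GeneratesThickly X) :
    ∀ (n : ℤ) (f : X ⟶ X⟦n⟧), f ≠ 0 → IsIso f := by
  have hBB : HasBinaryBiproducts C := hasBinaryBiproducts_of_finite_biproducts C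
  intro n f hf
  obtain ⟨Z, g, h, hT⟩ := Pretriangulated.distinguished_cocone_triangle f
  obtain ⟨m, Ts, φ, hiso, hφ, ⟨e⟩⟩ := hsplit _ hT
  have hcomm₁ : f ≫ e.hom.hom₂ = e.hom.hom₁ ≫ biproduct.map (fun i => (Ts i).mor₁) :=
    e.hom.comm₁
  -- the composite of the two biproduct maps vanishes
  have rel12 : biproduct.map (fun i => (Ts i).mor₁) ≫ biproduct.map (fun i => (Ts i).mor₂) = 0 := by
    have h12 : f ≫ g = 0 := comp_distTriang_mor_zero₁₂ _ hT
    have c1 : biproduct.map (fun i => (Ts i).mor₁) ≫ e.inv.hom₂ = e.inv.hom₁ ≫ f := e.inv.comm₁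
    have c2 : biproduct.map (fun i => (Ts i).mor₂) ≫ e.inv.hom₃ = e.inv.hom₂ ≫ g := e.inv.comm₂
    have : (biproduct.map (fun i => (Ts i).mor₁) ≫ biproduct.map (fun i => (Ts i).mor₂)) ≫
        e.inv.hom₃ = 0 := by
      erw [Category.assoc, c2, ← Category.assoc, c1, Category.assoc, h12, comp_zero]
    have h3 : IsIso e.inv.hom₃ := inferInstance
    exact (cancel_mono e.inv.hom₃).1 (this.trans zero_comp.symm)
  have rel12i : ∀ i, (Ts i).mor₁ ≫ (Ts i).mor₂ = 0 := by
    intro i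
    have := congrArg (fun t => biproduct.ι (fun i => (Ts i).obj₁) i ≫ t ≫
      biproduct.π (fun i => (Ts i).obj₃) i) rel12
    simpa using this
  -- the connecting relation
  have rel31 : φ ≫ (biproduct.map (fun i => (Ts i).mor₁))⟦(1 : ℤ)⟧' = 0 := by
    have h31 : h ≫ f⟦(1 : ℤ)⟧' = 0 := comp_distTriang_mor_zero₃₁ _ hT
    have c3 : h ≫ (e.hom.hom₁)⟦(1 : ℤ)⟧' = e.hom.hom₃ ≫ φ := e.hom.comm₃
    have key : e.hom.hom₃ ≫ φ ≫ (biproduct.map (fun i => (Ts i).mor₁))⟦(1 : ℤ)⟧' = 0 := by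
      erw [← Category.assoc, ← c3, Category.assoc, ← Functor.map_comp, ← hcomm₁,
        Functor.map_comp, ← Category.assoc, h31, zero_comp]
    have h3 : IsIso e.hom.hom₃ := inferInstance
    exact (cancel_epi e.hom.hom₃).1 (key.trans comp_zero.symm)
  have rel31i : ∀ i, (Ts i).mor₃ ≫ ((Ts i).mor₁)⟦(1 : ℤ)⟧' = 0 := by
    intro i
    have e1 : (Ts i).mor₃ ≫ ((Ts i).mor₁ ≫ biproduct.ι (fun i => (Ts i).obj₂) i)⟦(1 : ℤ)⟧' = 0 := by
      rw [← biproduct.ι_map (fun i => (Ts i).mor₁) i, Functor.map_comp, ← Category.assoc,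
        ← hφ i, Category.assoc, rel31, comp_zero]
    have e2 := congrArg (fun t => t ≫ (biproduct.π (fun i => (Ts i).obj₂) i)⟦(1 : ℤ)⟧') e1
    simpa only [Category.assoc, ← Functor.map_comp, biproduct.ι_π_self, Functor.map_id,
      Category.comp_id, zero_comp] using e2
  -- there is an index where mor₁ is nonzero
  have hex : ∃ i₀, (Ts i₀).mor₁ ≠ 0 := by
    by_contra hc
    push_neg at hc
    apply hf
    have hfz : f ≫ e.hom.hom₂ = 0 := by
      rw [hcomm₁]
      apply biproduct.hom_ext
      intro j
      erw [Category.assoc, biproduct.map_π, hc j, comp_zero, comp_zero, zero_comp]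
    have h2 : IsIso e.hom.hom₂ := inferInstance
    exact (cancel_mono e.hom.hom₂).1 (hfz.trans zero_comp.symm)
  obtain ⟨i₀, hi₀⟩ := hex
  -- at i₀ the first arrow must be the isomorphism
  have hIso₁ : IsIso ((Ts i₀).mor₁) := by
    rcases hiso i₀ with hh | hh | hh
    · exact hh
    · exfalso
      apply hi₀
      rw [← cancel_mono ((Ts i₀).mor₂), rel12i i₀, zero_comp]
    · exfalso
      apply hi₀
      have : ((Ts i₀).mor₁)⟦(1 : ℤ)⟧' = 0 := by
        rw [← cancel_epi ((Ts i₀).mor₃), rel31i i₀, comp_zero]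
      apply (shiftFunctor C (1 : ℤ)).map_injective
      rw [this, Functor.map_zero]
  -- nonzero objects at i₀
  have hnz₁ : ¬ IsZero ((Ts i₀).obj₁) := fun hz => hi₀ (hz.eq_of_src _ _)
  have hnz₂ : ¬ IsZero ((Ts i₀).obj₂) := fun hz => hi₀ (hz.eq_of_tgt _ _)
  -- indecomposability of X⟦n⟧
  have hind₂ : ∀ A B : C, ((X⟦n⟧) ≅ A ⊞ B) → IsZero A ∨ IsZero B := by
    intro A B w
    have w' : X ≅ A⟦(-n : ℤ)⟧ ⊞ B⟦(-n : ℤ)⟧ :=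
      (shiftShiftNeg X n).symm ≪≫ (shiftFunctor C (-n)).mapIso w ≪≫
        auxMapBiprod (shiftFunctor C (-n)) A B
    rcases hind _ _ w' with hz | hz
    · exact Or.inl (((shiftFunctor C (n : ℤ)).map_isZero hz).of_iso (shiftNegShift A n).symm)
    · exact Or.inr (((shiftFunctor C (n : ℤ)).map_isZero hz).of_iso (shiftNegShift B n).symm)
  -- all other summands vanish
  have zero₁ : ∀ i, i ≠ i₀ → IsZero ((Ts i).obj₁) :=
    aux_zero_of_ne hind (Triangle.π₁.mapIso e) hnz₁
  have zero₂ : ∀ i, i ≠ i₀ → IsZero ((Ts i).obj₂) :=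
    aux_zero_of_ne hind₂ (Triangle.π₂.mapIso e) hnz₂
  have allIso : ∀ i, IsIso ((Ts i).mor₁) := by
    intro i
    by_cases hii : i = i₀
    · subst hii; exact hIso₁
    · exact ⟨0, (zero₁ i hii).eq_of_src _ _, (zero₂ i hii).eq_of_src _ _⟩
  have hmapIso : IsIso (biproduct.map (fun i => (Ts i).mor₁)) := by
    have : biproduct.map (fun i => (Ts i).mor₁) =
        (biproduct.mapIso (fun i => asIso ((Ts i).mor₁))).hom := by
      simp [biproduct.mapIso]
    rw [this]
    infer_instance
  have h2 : IsIso (X := (shiftFunctor C n).obj X) (Y := ⨁ fun i => (Ts i).obj₂) e.hom.hom₂ :=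
    (inferInstance : IsIso (Triangle.π₂.map e.hom))
  have h1 : IsIso (X := X) (Y := ⨁ fun i => (Ts i).obj₁) e.hom.hom₁ :=
    (inferInstance : IsIso (Triangle.π₁.map e.hom))
  have hfeq : f = e.hom.hom₁ ≫ biproduct.map (fun i => (Ts i).mor₁) ≫ @inv _ _ _ _ e.hom.hom₂ h2 := by
    erw [← Category.assoc, ← hcomm₁, Category.assoc, IsIso.hom_inv_id, Category.comp_id]
  rw [hfeq]
  exact @IsIso.comp_isIso _ _ _ _ _ _ _ h1 (@IsIso.comp_isIso _ _ _ _ _ _ _ hmapIso (@IsIso.inv_isIso _ _ _ _ _ h2))
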